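/- Let t ≥ 3 and let s = (a1, ..., at) be a sequence of elements of {1, ..., n}. Then s is cyclic if and only if for every σ in D_{2t} \ C_t (i.e., every element of the dihedral group of order 2t not a rotation), the sequence (a_{1σ}, ..., a_{tσ}) is anti-cyclic. -/

import Mathlib

open Finset Equiv

private lemma reindex_card {α : Type*} [Fintype α] [DecidableEq α] (σ : Equiv.Perm α)
    (p : α → Prop) [DecidablePred p] :
    (Finset.univ.filter fun i => p (σ i)).card = (Finset.univ.filter p).card := by
  have h : (Finset.univ.filter p) = (Finset.univ.filter fun i => p (σ i)).image σ := by
    ext j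
    simp only [mem_image, mem_filter, mem_univ, true_and]
    constructor
    · intro hj; exact ⟨σ.symm j, by simpa using hj, σ.apply_symm_apply j⟩
    · rintro ⟨i, hi, rfl⟩; exact hi
  rw [h, Finset.card_image_of_injective _ σ.injective]

private lemma next_eq (m : ℕ) (i : Fin (m + 1)) (h : (i.val + 1) % (m + 1) < m + 1) :
    (⟨(i.val + 1) % (m + 1), h⟩ : Fin (m + 1)) = finRotate (m + 1) i := by
  rw [finRotate_succ_apply]
  ext
  simp [Fin.add_def, Fin.val_one']

private lemma rev_rot (m : ℕ) (i : Fin (m + 1)) :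
    Fin.revPerm (finRotate (m + 1) i) = (finRotate (m + 1))⁻¹ (Fin.revPerm i) := by
  rw [Equiv.Perm.eq_inv_iff_eq, finRotate_succ_apply, finRotate_succ_apply]
  ext
  simp only [Fin.revPerm_apply, Fin.val_rev, Fin.add_def, Fin.val_one']
  rcases Nat.eq_zero_or_pos m with rfl | hm
  · have := i.isLt; omega
  · have h1 : 1 % (m + 1) = 1 := Nat.mod_eq_of_lt (by omega)
    rw [h1]
    rcases Nat.lt_or_ge i.val m with h | h
    · have h2 : (i.val + 1) % (m + 1) = i.val + 1 := Nat.mod_eq_of_lt (by omega)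
      rw [h2]
      have h3 : m + 1 - (i.val + 1 + 1) + 1 = m - i.val := by omega
      rw [h3, Nat.mod_eq_of_lt (by omega)]
      omega
    · have hi : i.val = m := by omega
      rw [hi]
      simp [Nat.mod_self]

private lemma cyc_rev (m n : ℕ) (b : Fin (m + 1) → Fin n) :
    (Finset.univ.filter fun i => b (Fin.revPerm i) < b (Fin.revPerm (finRotate (m + 1) i))).card
      = (Finset.univ.filter fun i => b (finRotate (m + 1) i) < b i).card := by
  have e1 : (Finset.univ.filter fun i =>
        b (Fin.revPerm i) < b (Fin.revPerm (finRotate (m + 1) i)))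
      = (Finset.univ.filter fun i =>
        (fun j => b j < b ((finRotate (m + 1))⁻¹ j)) (Fin.revPerm i)) :=
    Finset.filter_congr (fun i _ => by rw [rev_rot])
  have e2 : (Finset.univ.filter fun i =>
        (fun j => b j < b ((finRotate (m + 1))⁻¹ j)) (finRotate (m + 1) i))
      = (Finset.univ.filter fun i => b (finRotate (m + 1) i) < b i) :=
    Finset.filter_congr (fun i _ => by simp only [Equiv.Perm.inv_def, Equiv.symm_apply_apply])
  rw [e1, reindex_card Fin.revPerm (fun j => b j < b ((finRotate (m + 1))⁻¹ j)), ← e2,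
    reindex_card (finRotate (m + 1)) (fun j => b j < b ((finRotate (m + 1))⁻¹ j))]

private lemma rot_inv (m n : ℕ) (b : Fin (m + 1) → Fin n) (k : ℤ) :
    (Finset.univ.filter fun i => b ((finRotate (m + 1) ^ k) (finRotate (m + 1) i))
        < b ((finRotate (m + 1) ^ k) i)).card
      = (Finset.univ.filter fun i => b (finRotate (m + 1) i) < b i).card := by
  have hc : ∀ i, (finRotate (m + 1) ^ k) (finRotate (m + 1) i)
      = finRotate (m + 1) ((finRotate (m + 1) ^ k) i) := by
    intro i
    rw [← Equiv.Perm.mul_apply, ← Equiv.Perm.mul_apply,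
      ((Commute.refl (finRotate (m + 1))).zpow_left k).eq]
  have e1 : (Finset.univ.filter fun i => b ((finRotate (m + 1) ^ k) (finRotate (m + 1) i))
        < b ((finRotate (m + 1) ^ k) i))
      = (Finset.univ.filter fun i =>
          (fun j => b (finRotate (m + 1) j) < b j) ((finRotate (m + 1) ^ k) i)) :=
    Finset.filter_congr (fun i _ => by rw [hc])
  rw [e1, reindex_card (finRotate (m + 1) ^ k) (fun j => b (finRotate (m + 1) j) < b j)]

private lemma rev_sq (m : ℕ) : (Fin.revPerm : Equiv.Perm (Fin (m + 1))) * Fin.revPerm = 1 := by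
  ext i
  simp [Equiv.Perm.mul_apply]

private lemma rev_inv_eq (m : ℕ) : (Fin.revPerm : Equiv.Perm (Fin (m + 1)))⁻¹ = Fin.revPerm :=
  inv_eq_of_mul_eq_one_left (rev_sq m)

private lemma conj_rot (m : ℕ) :
    Fin.revPerm * finRotate (m + 1) * Fin.revPerm = (finRotate (m + 1))⁻¹ := by
  ext i
  rw [Equiv.Perm.mul_apply, Equiv.Perm.mul_apply, rev_rot m (Fin.revPerm i)]
  simp

private lemma conj_mem (m : ℕ) {ρ : Equiv.Perm (Fin (m + 1))}
    (hρ : ρ ∈ Subgroup.zpowers (finRotate (m + 1))) :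
    Fin.revPerm * ρ * Fin.revPerm ∈ Subgroup.zpowers (finRotate (m + 1)) := by
  obtain ⟨k, rfl⟩ := Subgroup.mem_zpowers_iff.mp hρ
  have key : Fin.revPerm * finRotate (m + 1) ^ k * Fin.revPerm
      = (finRotate (m + 1))⁻¹ ^ k := by
    calc Fin.revPerm * finRotate (m + 1) ^ k * Fin.revPerm
        = Fin.revPerm * finRotate (m + 1) ^ k * Fin.revPerm⁻¹ := by rw [rev_inv_eq]
      _ = (Fin.revPerm * finRotate (m + 1) * Fin.revPerm⁻¹) ^ k := conj_zpow.symm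
      _ = (finRotate (m + 1))⁻¹ ^ k := by rw [rev_inv_eq, conj_rot]
  rw [key]
  exact ⟨-k, by show finRotate (m + 1) ^ (-k) = _; rw [zpow_neg, ← inv_zpow]⟩

private lemma dihedral_cases (m : ℕ) {σ : Equiv.Perm (Fin (m + 1))}
    (h : σ ∈ Subgroup.closure {finRotate (m + 1), Fin.revPerm}) :
    σ ∈ Subgroup.zpowers (finRotate (m + 1)) ∨
      σ * Fin.revPerm ∈ Subgroup.zpowers (finRotate (m + 1)) := by
  induction h using Subgroup.closure_induction with
  | mem x hx =>
    rcases hx with rfl | rfl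
    · exact Or.inl (Subgroup.mem_zpowers _)
    · exact Or.inr (by rw [rev_sq]; exact one_mem _)
  | one => exact Or.inl (one_mem _)
  | mul x y hx hy ihx ihy =>
    rcases ihx with hx' | hx' <;> rcases ihy with hy' | hy'
    · exact Or.inl (mul_mem hx' hy')
    · exact Or.inr (by rw [mul_assoc]; exact mul_mem hx' hy')
    · refine Or.inr ?_
      have h3 : x * y * Fin.revPerm
          = (x * Fin.revPerm) * (Fin.revPerm⁻¹ * y * Fin.revPerm) := by group
      rw [rev_inv_eq] at h3
      rw [h3]
      exact mul_mem hx' (conj_mem m hy')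
    · refine Or.inl ?_
      have h4 : x * y
          = (x * Fin.revPerm) * (Fin.revPerm⁻¹ * (y * Fin.revPerm) * Fin.revPerm⁻¹) := by
        group
      rw [rev_inv_eq] at h4
      rw [h4]
      exact mul_mem hx' (conj_mem m hy')
  | inv x hx ihx =>
    rcases ihx with hx' | hx'
    · exact Or.inl (inv_mem hx')
    · refine Or.inr ?_
      have h5 : x⁻¹ * (Fin.revPerm : Equiv.Perm (Fin (m + 1)))⁻¹
          = Fin.revPerm * (x * Fin.revPerm)⁻¹ * Fin.revPerm⁻¹ := by group
      rw [rev_inv_eq] at h5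
      rw [h5]
      exact conj_mem m (inv_mem hx')

private lemma rev_not_mem (m : ℕ) (hm : 2 ≤ m) :
    (Fin.revPerm : Equiv.Perm (Fin (m + 1))) ∉ Subgroup.zpowers (finRotate (m + 1)) := by
  intro hmem
  obtain ⟨k, hk⟩ := Subgroup.mem_zpowers_iff.mp hmem
  have hc : ∀ i, Fin.revPerm (finRotate (m + 1) i) = finRotate (m + 1) (Fin.revPerm i) := by
    intro i
    rw [← Equiv.Perm.mul_apply, ← Equiv.Perm.mul_apply, ← hk,
      ((Commute.refl (finRotate (m + 1))).zpow_left k).eq]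
  have h0 := hc 0
  rw [finRotate_succ_apply, finRotate_succ_apply] at h0
  apply_fun Fin.val at h0
  simp only [Fin.revPerm_apply, Fin.val_rev, Fin.add_def, Fin.val_one', Fin.val_zero] at h0
  have e1 : 1 % (m + 1) = 1 := Nat.mod_eq_of_lt (by omega)
  rw [e1] at h0
  have e2 : (0 + 1) % (m + 1) = 1 := Nat.mod_eq_of_lt (by omega)
  rw [e2] at h0
  have e3 : m + 1 - (0 + 1) + 1 = m + 1 := by omega
  rw [e3, Nat.mod_self] at h0
  omega

private lemma asc_card (m n : ℕ) (a : Fin (m + 1) → Fin n) (k : ℤ) :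
    (Finset.univ.filter fun i =>
        a ((finRotate (m + 1) ^ k) (Fin.revPerm i))
          < a ((finRotate (m + 1) ^ k) (Fin.revPerm (finRotate (m + 1) i)))).card
      = (Finset.univ.filter fun i => a (finRotate (m + 1) i) < a i).card :=
  (cyc_rev m n fun j => a ((finRotate (m + 1) ^ k) j)).trans (rot_inv m n a k)


/-- A sequence `a : Fin t → Fin n` is cyclic if at most one index `i`
satisfies `a i > a (i+1)` (indices mod `t`). -/
def IsCyclicSeq {n t : ℕ} (a : Fin t → Fin n) : Prop :=
  (Finset.univ.filter fun i : Fin t =>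
    a ⟨(i.val + 1) % t, Nat.mod_lt _ i.pos⟩ < a i).card ≤ 1

/-- A sequence is anti-cyclic if at most one index `i`
satisfies `a i < a (i+1)` (indices mod `t`). -/
def IsAntiCyclicSeq {n t : ℕ} (a : Fin t → Fin n) : Prop :=
  (Finset.univ.filter fun i : Fin t =>
    a i < a ⟨(i.val + 1) % t, Nat.mod_lt _ i.pos⟩).card ≤ 1

/-- A sequence is oriented if it is cyclic or anti-cyclic. -/
def IsOrientedSeq {n t : ℕ} (a : Fin t → Fin n) : Prop :=
  IsCyclicSeq a ∨ IsAntiCyclicSeq a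

/-- For t ≥ 3, s is cyclic iff for every element of the dihedral group D_{2t}
which is not a rotation, the permuted sequence is anti-cyclic. -/
theorem cyclic_iff_forall_reflection_anticyclic {n t : ℕ} (ht : 3 ≤ t) (a : Fin t → Fin n) :
    IsCyclicSeq a ↔
      ∀ σ : Equiv.Perm (Fin t),
        σ ∈ Subgroup.closure {finRotate t, Fin.revPerm} →
        σ ∉ Subgroup.zpowers (finRotate t) →
        IsAntiCyclicSeq (fun i => a (σ i)) := by
  obtain ⟨m, rfl⟩ : ∃ m, t = m + 1 := ⟨t - 1, by omega⟩
  have hm : 2 ≤ m := by omega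
  simp only [IsCyclicSeq, IsAntiCyclicSeq, next_eq]
  constructor
  · intro hcyc σ hσc hσz
    rcases dihedral_cases m hσc with h | h
    · exact absurd h hσz
    obtain ⟨k, hk⟩ := Subgroup.mem_zpowers_iff.mp h
    have hσ : ∀ i, σ i = (finRotate (m + 1) ^ k) (Fin.revPerm i) := by
      intro i
      have hσ' : σ = finRotate (m + 1) ^ k * Fin.revPerm := by
        rw [hk, mul_assoc, rev_sq, mul_one]
      rw [hσ']
      rfl
    simp only [hσ]
    exact le_of_eq_of_le (asc_card m n a k) hcyc
  · intro h
    have hv_in : (Fin.revPerm : Equiv.Perm (Fin (m + 1)))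
        ∈ Subgroup.closure {finRotate (m + 1), Fin.revPerm} :=
      Subgroup.subset_closure (by simp)
    have hanti := h Fin.revPerm hv_in (rev_not_mem m hm)
    exact le_of_eq_of_le (cyc_rev m n a).symm hanti
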